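/- arXiv:math/9808012 — 4 statements merged into one kernel-verified Lean document; each statement's English description precedes it below -/
import Mathlib

section
/- Fast Function Factor Lemma: Let κ be a cardinal, let γ < κ be an inaccessible cardinal, let α < κ be an ordinal, and let λ be the least inaccessible cardinal greater than both γ and α; assume λ < κ. Then p = {⟨γ,α⟩} is a condition in F_κ, and the map q ↦ (q↾γ, q↾[λ,κ)) is an order isomorphism from the cone F_κ↾p = {q ∈ F_κ : q ≤ p} onto the product poset F_γ × F_{λ,κ}. In particular, every q ≤ p satisfies dom(q) ∩ (γ, λ) = ∅ and q(γ) = α. -/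
open Cardinal Set

/-- An ordinal is (the ordinal of) an inaccessible cardinal. -/
def OrdInacc (o : Ordinal.{0}) : Prop := ∃ c : Cardinal.{0}, c.IsInaccessible ∧ c.ord = o

/-- `p` is a condition in the fast function forcing poset `F_κ`: a partial function
from `κ` to `κ` (coded as a functional set of ordered pairs) whose domain is a
set of inaccessible cardinals below `κ` of size less than `κ`, and such that for
every `γ` in its domain, `p '' γ ⊆ γ` and `|p ↾ γ| < γ`. -/
def IsFastCond (κ : Cardinal.{0}) (p : Set (Ordinal.{0} × Ordinal.{0})) : Prop :=
  (∀ a b b', (a, b) ∈ p → (a, b') ∈ p → b = b') ∧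
  (∀ a b, (a, b) ∈ p → a < κ.ord ∧ b < κ.ord) ∧
  (∀ a b, (a, b) ∈ p → OrdInacc a) ∧
  #{a : Ordinal.{0} | ∃ b, (a, b) ∈ p} < Cardinal.lift.{1, 0} κ ∧
  (∀ γ c, (γ, c) ∈ p →
    (∀ a b, (a, b) ∈ p → a < γ → b < γ) ∧
    #{x : Ordinal.{0} × Ordinal.{0} | x ∈ p ∧ x.1 < γ} < Cardinal.lift.{1, 0} γ.card)

/-- `p` is a condition in `F_{lo,κ}`, the fast function poset on `κ` restricted to
conditions with domain contained in `[lo, κ)`. -/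
def IsFastTailCond (lo : Ordinal.{0}) (κ : Cardinal.{0})
    (p : Set (Ordinal.{0} × Ordinal.{0})) : Prop :=
  IsFastCond κ p ∧ ∀ a b, (a, b) ∈ p → lo ≤ a

/-- The domain of a set of pairs is no bigger than the set itself. -/
lemma mk_dom_le_mk_pairs (p : Set (Ordinal.{0} × Ordinal.{0})) :
    #{a : Ordinal.{0} | ∃ b, (a, b) ∈ p} ≤ #p := by
  have : ∀ x : {a : Ordinal.{0} | ∃ b, (a, b) ∈ p}, ((x : Ordinal.{0}), Classical.choose x.2) ∈ p :=
    fun x => Classical.choose_spec x.2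
  apply Cardinal.mk_le_of_injective
    (f := fun x : {a : Ordinal.{0} | ∃ b, (a, b) ∈ p} =>
      (⟨((x : Ordinal.{0}), Classical.choose x.2), this x⟩ : p))
  intro x y h
  apply Subtype.ext
  have := congrArg (fun z : p => (z : Ordinal.{0} × Ordinal.{0}).1) h
  simpa using this

/-- A functional set of pairs is no bigger than its domain. -/
lemma mk_pairs_le_mk_dom (p : Set (Ordinal.{0} × Ordinal.{0}))
    (hfun : ∀ a b b', (a, b) ∈ p → (a, b') ∈ p → b = b') :
    Cardinal.mk p ≤ #{a : Ordinal.{0} | ∃ b, (a, b) ∈ p} := by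
  apply Cardinal.mk_le_of_injective
    (f := fun x : p => (⟨(x : Ordinal.{0} × Ordinal.{0}).1,
      ⟨(x : Ordinal.{0} × Ordinal.{0}).2, by simpa using x.2⟩⟩ :
      {a : Ordinal.{0} | ∃ b, (a, b) ∈ p}))
  intro x y h
  apply Subtype.ext
  have h1 : (x : Ordinal.{0} × Ordinal.{0}).1 = (y : Ordinal.{0} × Ordinal.{0}).1 := by
    simpa using h
  have hx : ((x : Ordinal.{0} × Ordinal.{0}).1, (x : Ordinal.{0} × Ordinal.{0}).2) ∈ p := by
    simpa using x.2
  have hy : ((x : Ordinal.{0} × Ordinal.{0}).1, (y : Ordinal.{0} × Ordinal.{0}).2) ∈ p := by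
    rw [h1]; simpa using y.2
  have h2 := hfun _ _ _ hx hy
  exact Prod.ext h1 h2

/-- **Fast Function Factor Lemma.**  Below the condition `p = {⟨γ, α⟩}`, where `γ` is
inaccessible and `λ` is the least inaccessible above both `γ` and `α` (with `λ < κ`),
the poset `F_κ ↾ p` is isomorphic to `F_γ × F_{λ,κ}` via `q ↦ (q ↾ γ, q ↾ [λ,κ))`:
the map is well defined, an order isomorphism (order-preserving in both directions,
injective and surjective); in particular every `q ≤ p` has domain disjoint from the
interval `(γ, λ)` and satisfies `q(γ) = α`. -/
theorem fast_function_factor_lemma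
    (κ γ lam : Cardinal.{0}) (α : Ordinal.{0})
    (hγ : γ.IsInaccessible) (hγκ : γ < κ) (hα : α < κ.ord)
    (hlam : lam.IsInaccessible ∧ γ < lam ∧ α < lam.ord ∧
      ∀ μ : Cardinal.{0}, μ.IsInaccessible → γ < μ → α < μ.ord → lam ≤ μ)
    (hlamκ : lam < κ) :
    -- `p = {⟨γ, α⟩}` is a condition in `F_κ`
    IsFastCond κ {(γ.ord, α)} ∧
    -- the map is well defined into `F_γ × F_{λ,κ}`
    (∀ q, IsFastCond κ q → {(γ.ord, α)} ⊆ q →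
      IsFastCond γ {x ∈ q | x.1 < γ.ord} ∧
      IsFastTailCond lam.ord κ {x ∈ q | lam.ord ≤ x.1}) ∧
    -- it is order preserving in both directions (`q' ≤ q` iff the images are
    -- componentwise below each other; recall `q' ≤ q` means `q ⊆ q'`)
    (∀ q q', IsFastCond κ q → {(γ.ord, α)} ⊆ q →
      IsFastCond κ q' → {(γ.ord, α)} ⊆ q' →
      (q ⊆ q' ↔ ({x ∈ q | x.1 < γ.ord} ⊆ {x ∈ q' | x.1 < γ.ord} ∧
                 {x ∈ q | lam.ord ≤ x.1} ⊆ {x ∈ q' | lam.ord ≤ x.1}))) ∧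
    -- it is injective on the cone below `p`
    (∀ q q', IsFastCond κ q → {(γ.ord, α)} ⊆ q →
      IsFastCond κ q' → {(γ.ord, α)} ⊆ q' →
      {x ∈ q | x.1 < γ.ord} = {x ∈ q' | x.1 < γ.ord} →
      {x ∈ q | lam.ord ≤ x.1} = {x ∈ q' | lam.ord ≤ x.1} → q = q') ∧
    -- it is surjective onto `F_γ × F_{λ,κ}`
    (∀ q₁ q₂, IsFastCond γ q₁ → IsFastTailCond lam.ord κ q₂ →
      ∃ q, IsFastCond κ q ∧ {(γ.ord, α)} ⊆ q ∧
        {x ∈ q | x.1 < γ.ord} = q₁ ∧ {x ∈ q | lam.ord ≤ x.1} = q₂) ∧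
    -- in particular: domain disjoint from `(γ, λ)` and `q(γ) = α`
    (∀ q, IsFastCond κ q → {(γ.ord, α)} ⊆ q →
      (∀ a b, (a, b) ∈ q → ¬(γ.ord < a ∧ a < lam.ord)) ∧
      (∀ b, (γ.ord, b) ∈ q → b = α)) := by
  obtain ⟨hlamI, hγlam, hαlam, hmin⟩ := hlam
  have hγord : γ.ord < κ.ord := Cardinal.ord_lt_ord.mpr hγκ
  have hγlamord : γ.ord < lam.ord := Cardinal.ord_lt_ord.mpr hγlam
  have hlamord : lam.ord < κ.ord := Cardinal.ord_lt_ord.mpr hlamκ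
  have hκinf : ℵ₀ ≤ Cardinal.lift.{1, 0} κ :=
    Cardinal.aleph0_le_lift.mpr (le_of_lt (lt_trans hγ.1 hγκ))
  have hγlift : (1 : Cardinal.{1}) < Cardinal.lift.{1, 0} γ := by
    have : ℵ₀ ≤ Cardinal.lift.{1, 0} γ := Cardinal.aleph0_le_lift.mpr (le_of_lt hγ.1)
    exact lt_of_lt_of_le Cardinal.one_lt_aleph0 this
  have hγκlift : Cardinal.lift.{1, 0} γ < Cardinal.lift.{1, 0} κ := Cardinal.lift_lt.mpr hγκ
  -- Part 1: the singleton is a condition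
  have part1 : IsFastCond κ {(γ.ord, α)} := by
    refine ⟨?_, ?_, ?_, ?_, ?_⟩
    · intro a b b' h h'
      simp only [Set.mem_singleton_iff, Prod.mk.injEq] at h h'
      rw [h.2, h'.2]
    · intro a b h
      simp only [Set.mem_singleton_iff, Prod.mk.injEq] at h
      exact ⟨h.1 ▸ hγord, h.2 ▸ hα⟩
    · intro a b h
      simp only [Set.mem_singleton_iff, Prod.mk.injEq] at h
      exact ⟨γ, hγ, h.1.symm⟩
    · have hset : {a : Ordinal.{0} | ∃ b, (a, b) ∈ ({(γ.ord, α)} : Set _)} = {γ.ord} := by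
        ext a
        simp [Prod.ext_iff]
      rw [hset, Cardinal.mk_singleton]
      exact lt_of_lt_of_le Cardinal.one_lt_aleph0 hκinf
    · intro γ' c h
      simp only [Set.mem_singleton_iff, Prod.mk.injEq] at h
      constructor
      · intro a b hab hlt
        simp only [Set.mem_singleton_iff, Prod.mk.injEq] at hab
        rw [h.1, hab.1] at hlt
        exact absurd hlt (lt_irrefl _)
      · rw [h.1]
        have hset : {x : Ordinal.{0} × Ordinal.{0} | x ∈ ({(γ.ord, α)} : Set _) ∧ x.1 < γ.ord}
            = ∅ := by
          ext x
          simp only [Set.mem_setOf_eq, Set.mem_singleton_iff, Set.mem_empty_iff_false,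
            iff_false, not_and]
          rintro rfl
          exact lt_irrefl _
        rw [hset]
        simp only [Cardinal.mk_emptyCollection, Cardinal.card_ord]
        exact lt_of_le_of_lt (show (0 : Cardinal.{1}) ≤ 1 from zero_le) hγlift
  -- Key fact: the domain of any extension avoids the interval (γ.ord, lam.ord)
  have key : ∀ q, IsFastCond κ q → (γ.ord, α) ∈ q →
      ∀ a b, (a, b) ∈ q → γ.ord < a → lam.ord ≤ a := by
    intro q hq hpq a b hab hlt
    obtain ⟨hfun, hbd, hinacc, hdom, hrest⟩ := hq
    obtain ⟨c, hc, hceq⟩ := hinacc a b hab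
    have hα' : α < a := (hrest a b hab).1 γ.ord α hpq hlt
    have hγc : γ < c := by
      rw [← Cardinal.ord_lt_ord, hceq]; exact hlt
    have hαc : α < c.ord := by rw [hceq]; exact hα'
    have := hmin c hc hγc hαc
    calc lam.ord ≤ c.ord := Cardinal.ord_le_ord.mpr this
      _ = a := hceq
  have keyval : ∀ q, IsFastCond κ q → (γ.ord, α) ∈ q → ∀ b, (γ.ord, b) ∈ q → b = α :=
    fun q hq hpq b hb => hq.1 γ.ord b α hb hpq
  -- Trichotomy for elements of an extension
  have tricho : ∀ q, IsFastCond κ q → (γ.ord, α) ∈ q →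
      ∀ x ∈ q, x.1 < γ.ord ∨ x = (γ.ord, α) ∨ lam.ord ≤ x.1 := by
    intro q hq hpq x hx
    rcases lt_trichotomy x.1 γ.ord with h | h | h
    · exact Or.inl h
    · refine Or.inr (Or.inl ?_)
      have hx' : (γ.ord, x.2) ∈ q := by rw [← h]; simpa using hx
      have := keyval q hq hpq x.2 hx'
      exact Prod.ext h this
    · exact Or.inr (Or.inr (key q hq hpq x.1 x.2 (by simpa using hx) h))
  -- Part 2: well-definedness
  have part2 : ∀ q, IsFastCond κ q → {(γ.ord, α)} ⊆ q →
      IsFastCond γ {x ∈ q | x.1 < γ.ord} ∧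
      IsFastTailCond lam.ord κ {x ∈ q | lam.ord ≤ x.1} := by
    intro q hq hpq
    have hmem : (γ.ord, α) ∈ q := hpq rfl
    obtain ⟨hfun, hbd, hinacc, hdom, hrest⟩ := hq
    constructor
    · refine ⟨?_, ?_, ?_, ?_, ?_⟩
      · intro a b b' h h'
        exact hfun a b b' h.1 h'.1
      · intro a b h
        exact ⟨h.2, (hrest γ.ord α hmem).1 a b h.1 h.2⟩
      · intro a b h
        exact hinacc a b h.1
      · have hle : #{a : Ordinal.{0} | ∃ b, (a, b) ∈ {x ∈ q | x.1 < γ.ord}}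
            ≤ #{x ∈ q | x.1 < γ.ord} := mk_dom_le_mk_pairs _
        have heq : ({x ∈ q | x.1 < γ.ord} : Set (Ordinal.{0} × Ordinal.{0}))
            = {x : Ordinal.{0} × Ordinal.{0} | x ∈ q ∧ x.1 < γ.ord} := rfl
        have hlt := (hrest γ.ord α hmem).2
        rw [Cardinal.card_ord] at hlt
        exact lt_of_le_of_lt (heq ▸ hle) hlt
      · intro γ' c hc
        refine ⟨fun a b h hlt => (hrest γ' c hc.1).1 a b h.1 hlt, ?_⟩
        have heq : {x : Ordinal.{0} × Ordinal.{0} | x ∈ {x ∈ q | x.1 < γ.ord} ∧ x.1 < γ'}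
            = {x : Ordinal.{0} × Ordinal.{0} | x ∈ q ∧ x.1 < γ'} := by
          ext x
          constructor
          · rintro ⟨⟨h1, _⟩, h3⟩; exact ⟨h1, h3⟩
          · rintro ⟨h1, h3⟩; exact ⟨⟨h1, lt_trans h3 hc.2⟩, h3⟩
        rw [heq]
        exact (hrest γ' c hc.1).2
    · refine ⟨⟨?_, ?_, ?_, ?_, ?_⟩, fun a b h => h.2⟩
      · intro a b b' h h'
        exact hfun a b b' h.1 h'.1
      · intro a b h
        exact hbd a b h.1
      · intro a b h
        exact hinacc a b h.1
      · have hsub : {a : Ordinal.{0} | ∃ b, (a, b) ∈ {x ∈ q | lam.ord ≤ x.1}}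
            ⊆ {a : Ordinal.{0} | ∃ b, (a, b) ∈ q} := by
          rintro a ⟨b, hb⟩; exact ⟨b, hb.1⟩
        exact lt_of_le_of_lt (Cardinal.mk_le_mk_of_subset hsub) hdom
      · intro γ' c hc
        refine ⟨fun a b h hlt => (hrest γ' c hc.1).1 a b h.1 hlt, ?_⟩
        have hsub : {x : Ordinal.{0} × Ordinal.{0} | x ∈ {x ∈ q | lam.ord ≤ x.1} ∧ x.1 < γ'}
            ⊆ {x : Ordinal.{0} × Ordinal.{0} | x ∈ q ∧ x.1 < γ'} := by
          rintro x ⟨⟨h1, _⟩, h3⟩; exact ⟨h1, h3⟩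
        exact lt_of_le_of_lt (Cardinal.mk_le_mk_of_subset hsub) (hrest γ' c hc.1).2
  -- Part 3: order preservation in both directions
  have part3 : ∀ q q', IsFastCond κ q → {(γ.ord, α)} ⊆ q →
      IsFastCond κ q' → {(γ.ord, α)} ⊆ q' →
      (q ⊆ q' ↔ ({x ∈ q | x.1 < γ.ord} ⊆ {x ∈ q' | x.1 < γ.ord} ∧
                 {x ∈ q | lam.ord ≤ x.1} ⊆ {x ∈ q' | lam.ord ≤ x.1})) := by
    intro q q' hq hpq hq' hpq'
    constructor
    · intro hsub
      exact ⟨fun x hx => ⟨hsub hx.1, hx.2⟩, fun x hx => ⟨hsub hx.1, hx.2⟩⟩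
    · rintro ⟨h1, h2⟩ x hx
      rcases tricho q hq (hpq rfl) x hx with h | h | h
      · exact (h1 ⟨hx, h⟩).1
      · rw [h]; exact hpq' rfl
      · exact (h2 ⟨hx, h⟩).1
  refine ⟨part1, part2, part3, ?_, ?_, ?_⟩
  -- Part 4: injectivity
  · intro q q' hq hpq hq' hpq' he1 he2
    apply Set.Subset.antisymm
    · exact (part3 q q' hq hpq hq' hpq').mpr ⟨he1.subset, he2.subset⟩
    · exact (part3 q' q hq' hpq' hq hpq).mpr ⟨he1.symm.subset, he2.symm.subset⟩
  -- Part 5: surjectivity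
  · rintro q₁ q₂ hq₁ ⟨hq₂, hq₂lo⟩
    obtain ⟨h1fun, h1bd, h1in, h1dom, h1rest⟩ := hq₁
    obtain ⟨h2fun, h2bd, h2in, h2dom, h2rest⟩ := hq₂
    set q : Set (Ordinal.{0} × Ordinal.{0}) := q₁ ∪ {(γ.ord, α)} ∪ q₂ with hqdef
    have cls : ∀ x ∈ q, (x ∈ q₁ ∧ x.1 < γ.ord) ∨ x = (γ.ord, α) ∨ (x ∈ q₂ ∧ lam.ord ≤ x.1) := by
      intro x hx
      rcases hx with (hx | hx) | hx
      · exact Or.inl ⟨hx, (h1bd x.1 x.2 (by simpa using hx)).1⟩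
      · exact Or.inr (Or.inl hx)
      · exact Or.inr (Or.inr ⟨hx, hq₂lo x.1 x.2 (by simpa using hx)⟩)
    have hq1mem : ∀ x ∈ q₁, x ∈ q := fun x hx => Or.inl (Or.inl hx)
    have hsing : ((γ.ord, α) : Ordinal.{0} × Ordinal.{0}) ∈ q := Or.inl (Or.inr rfl)
    have hq2mem : ∀ x ∈ q₂, x ∈ q := fun x hx => Or.inr hx
    -- q₁-pairs are all below γ.ord; pairs of q₂ start at lam.ord
    have hres1 : {x ∈ q | x.1 < γ.ord} = q₁ := by
      ext x
      constructor
      · rintro ⟨hx, hlt⟩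
        rcases cls x hx with h | h | h
        · exact h.1
        · exact absurd (h ▸ hlt) (lt_irrefl _)
        · exact absurd (lt_of_lt_of_le hlt (le_trans hγlamord.le h.2)) (lt_irrefl _)
      · intro hx
        exact ⟨hq1mem x hx, (h1bd x.1 x.2 (by simpa using hx)).1⟩
    have hres2 : {x ∈ q | lam.ord ≤ x.1} = q₂ := by
      ext x
      constructor
      · rintro ⟨hx, hle⟩
        rcases cls x hx with h | h | h
        · exact absurd (lt_of_le_of_lt hle (lt_trans h.2 hγlamord)) (lt_irrefl _)
        · rw [h] at hle; exact absurd (lt_of_le_of_lt hle hγlamord) (lt_irrefl _)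
        · exact h.1
      · intro hx
        exact ⟨hq2mem x hx, hq₂lo x.1 x.2 (by simpa using hx)⟩
    have hq1card : #q₁ < Cardinal.lift.{1, 0} γ :=
      lt_of_le_of_lt (mk_pairs_le_mk_dom q₁ h1fun) h1dom
    refine ⟨q, ⟨?_, ?_, ?_, ?_, ?_⟩, by rintro x rfl; exact hsing, hres1, hres2⟩
    · -- functionality
      intro a b b' hb hb'
      rcases cls (a, b) hb with h | h | h <;> rcases cls (a, b') hb' with h' | h' | h'
      · exact h1fun a b b' h.1 h'.1
      · simp only [Prod.mk.injEq] at h'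
        exact absurd (h'.1 ▸ h.2) (lt_irrefl _)
      · exact absurd (lt_of_lt_of_le (lt_trans h.2 hγlamord) h'.2) (lt_irrefl _)
      · simp only [Prod.mk.injEq] at h
        exact absurd (h.1 ▸ h'.2) (lt_irrefl _)
      · simp only [Prod.mk.injEq] at h h'
        rw [h.2, h'.2]
      · simp only [Prod.mk.injEq] at h
        have h2' : lam.ord ≤ a := h'.2
        rw [h.1] at h2'
        exact absurd (lt_of_lt_of_le hγlamord h2') (lt_irrefl _)
      · exact absurd (lt_of_lt_of_le (lt_trans h'.2 hγlamord) h.2) (lt_irrefl _)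
      · simp only [Prod.mk.injEq] at h'
        have h2' : lam.ord ≤ a := h.2
        rw [h'.1] at h2'
        exact absurd (lt_of_lt_of_le hγlamord h2') (lt_irrefl _)
      · exact h2fun a b b' h.1 h'.1
    · -- bounds
      intro a b hab
      rcases cls (a, b) hab with h | h | h
      · have := h1bd a b h.1
        exact ⟨lt_trans this.1 hγord, lt_trans this.2 hγord⟩
      · simp only [Prod.mk.injEq] at h
        exact ⟨h.1 ▸ hγord, h.2 ▸ hα⟩
      · exact h2bd a b h.1
    · -- inaccessibility of the domain
      intro a b hab
      rcases cls (a, b) hab with h | h | h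
      · exact h1in a b h.1
      · simp only [Prod.mk.injEq] at h
        exact ⟨γ, hγ, h.1.symm⟩
      · exact h2in a b h.1
    · -- domain size
      have hsub : {a : Ordinal.{0} | ∃ b, (a, b) ∈ q}
          ⊆ ({a : Ordinal.{0} | ∃ b, (a, b) ∈ q₁} ∪ {γ.ord})
            ∪ {a : Ordinal.{0} | ∃ b, (a, b) ∈ q₂} := by
        rintro a ⟨b, hb⟩
        rcases cls (a, b) hb with h | h | h
        · exact Or.inl (Or.inl ⟨b, h.1⟩)
        · simp only [Prod.mk.injEq] at h
          exact Or.inl (Or.inr h.1)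
        · exact Or.inr ⟨b, h.1⟩
      have hle := Cardinal.mk_le_mk_of_subset hsub
      have h1 : #({a : Ordinal.{0} | ∃ b, (a, b) ∈ q₁} ∪ {γ.ord}
            ∪ {a : Ordinal.{0} | ∃ b, (a, b) ∈ q₂} : Set Ordinal.{0})
          ≤ #({a : Ordinal.{0} | ∃ b, (a, b) ∈ q₁} ∪ {γ.ord} : Set Ordinal.{0})
            + #{a : Ordinal.{0} | ∃ b, (a, b) ∈ q₂} := Cardinal.mk_union_le _ _
      have h2 : #({a : Ordinal.{0} | ∃ b, (a, b) ∈ q₁} ∪ {γ.ord} : Set Ordinal.{0})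
          ≤ #{a : Ordinal.{0} | ∃ b, (a, b) ∈ q₁} + #({γ.ord} : Set Ordinal.{0}) :=
        Cardinal.mk_union_le _ _
      have ha : #{a : Ordinal.{0} | ∃ b, (a, b) ∈ q₁} < Cardinal.lift.{1, 0} κ :=
        lt_trans h1dom hγκlift
      have hb : #({γ.ord} : Set Ordinal.{0}) < Cardinal.lift.{1, 0} κ := by
        rw [Cardinal.mk_singleton]
        exact lt_of_lt_of_le Cardinal.one_lt_aleph0 hκinf
      have hfst : #({a : Ordinal.{0} | ∃ b, (a, b) ∈ q₁} ∪ {γ.ord} : Set Ordinal.{0})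
          < Cardinal.lift.{1, 0} κ :=
        lt_of_le_of_lt h2 (Cardinal.add_lt_of_lt hκinf ha hb)
      exact lt_of_le_of_lt hle
        (lt_of_le_of_lt h1 (Cardinal.add_lt_of_lt hκinf hfst h2dom))
    · -- fastness
      intro γ' c hc
      rcases cls (γ', c) hc with h | h | h
      · -- γ' in dom q₁, γ' < γ.ord
        refine ⟨?_, ?_⟩
        · intro a b hab hlt
          rcases cls (a, b) hab with h' | h' | h'
          · exact (h1rest γ' c h.1).1 a b h'.1 hlt
          · simp only [Prod.mk.injEq] at h'
            exact absurd (lt_trans (h'.1 ▸ hlt) h.2) (lt_irrefl _)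
          · exact absurd (lt_of_le_of_lt h'.2 (lt_trans (lt_trans hlt h.2) hγlamord))
              (lt_irrefl _)
        · have heq : {x : Ordinal.{0} × Ordinal.{0} | x ∈ q ∧ x.1 < γ'}
              = {x : Ordinal.{0} × Ordinal.{0} | x ∈ q₁ ∧ x.1 < γ'} := by
            ext x
            constructor
            · rintro ⟨hx, hlt⟩
              rcases cls x hx with h' | h' | h'
              · exact ⟨h'.1, hlt⟩
              · have hx1 : x.1 = γ.ord := by rw [h']
                rw [hx1] at hlt
                exact absurd (lt_trans hlt h.2) (lt_irrefl _)
              · exact absurd (lt_of_le_of_lt h'.2 (lt_trans (lt_trans hlt h.2) hγlamord))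
                  (lt_irrefl _)
            · rintro ⟨hx, hlt⟩
              exact ⟨hq1mem x hx, hlt⟩
          rw [heq]
          exact (h1rest γ' c h.1).2
      · -- γ' = γ.ord
        simp only [Prod.mk.injEq] at h
        obtain ⟨rfl, rfl⟩ := h
        refine ⟨?_, ?_⟩
        · intro a b hab hlt
          rcases cls (a, b) hab with h' | h' | h'
          · exact (h1bd a b h'.1).2
          · simp only [Prod.mk.injEq] at h'
            exact absurd (h'.1 ▸ hlt) (lt_irrefl _)
          · exact absurd (lt_of_le_of_lt h'.2 (lt_trans hlt hγlamord)) (lt_irrefl _)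
        · have heq : {x : Ordinal.{0} × Ordinal.{0} | x ∈ q ∧ x.1 < γ.ord} = q₁ := hres1
          rw [heq, Cardinal.card_ord]
          exact hq1card
      · -- γ' in dom q₂, lam.ord ≤ γ'
        have hγ'card : Cardinal.lift.{1, 0} lam ≤ Cardinal.lift.{1, 0} γ'.card := by
          apply Cardinal.lift_le.mpr
          calc lam = lam.ord.card := (Cardinal.card_ord lam).symm
            _ ≤ γ'.card := Ordinal.card_le_card h.2
        have hγ'inf : ℵ₀ ≤ Cardinal.lift.{1, 0} γ'.card :=
          le_trans (Cardinal.aleph0_le_lift.mpr (le_of_lt hlamI.1)) hγ'card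
        refine ⟨?_, ?_⟩
        · intro a b hab hlt
          rcases cls (a, b) hab with h' | h' | h'
          · exact lt_of_lt_of_le ((h1bd a b h'.1).2.trans hγlamord) h.2
          · simp only [Prod.mk.injEq] at h'
            exact h'.2 ▸ lt_of_lt_of_le hαlam h.2
          · exact (h2rest γ' c h.1).1 a b h'.1 hlt
        · have hsub : {x : Ordinal.{0} × Ordinal.{0} | x ∈ q ∧ x.1 < γ'}
              ⊆ (q₁ ∪ {(γ.ord, α)})
                ∪ {x : Ordinal.{0} × Ordinal.{0} | x ∈ q₂ ∧ x.1 < γ'} := by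
            rintro x ⟨hx, hlt⟩
            rcases cls x hx with h' | h' | h'
            · exact Or.inl (Or.inl h'.1)
            · exact Or.inl (Or.inr h')
            · exact Or.inr ⟨h'.1, hlt⟩
          have hb1 : #(q₁ ∪ {(γ.ord, α)} : Set (Ordinal.{0} × Ordinal.{0}))
              < Cardinal.lift.{1, 0} γ'.card := by
            refine lt_of_le_of_lt (Cardinal.mk_union_le _ _) (Cardinal.add_lt_of_lt hγ'inf ?_ ?_)
            · exact lt_of_lt_of_le hq1card
                (le_trans (Cardinal.lift_le.mpr (le_of_lt hγlam)) hγ'card)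
            · rw [Cardinal.mk_singleton]
              exact lt_of_lt_of_le Cardinal.one_lt_aleph0 hγ'inf
          have hb2 : #{x : Ordinal.{0} × Ordinal.{0} | x ∈ q₂ ∧ x.1 < γ'}
              < Cardinal.lift.{1, 0} γ'.card := (h2rest γ' c h.1).2
          exact lt_of_le_of_lt (Cardinal.mk_le_mk_of_subset hsub)
            (lt_of_le_of_lt (Cardinal.mk_union_le _ _)
              (Cardinal.add_lt_of_lt hγ'inf hb1 hb2))
  -- Part 6: disjointness from the interval and value at γ
  · intro q hq hpq
    have hmem : (γ.ord, α) ∈ q := hpq rfl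
    constructor
    · rintro a b hab ⟨h1, h2⟩
      exact absurd (key q hq hmem a b hab h1) (not_le.mpr h2)
    · exact keyval q hq hmem
end

section
/- Let κ be a regular cardinal and let λ < κ be an infinite cardinal. Then the poset F_{λ,κ} is ≤λ-directed closed: every downward-directed subset D of F_{λ,κ} of cardinality at most λ has a lower bound in F_{λ,κ}; indeed, the union ⋃D is itself a condition in F_{λ,κ} extending every member of D. -/
open Cardinal Set

/-- Regularity is preserved under universe lift. -/
lemma isRegular_lift_aux {c : Cardinal.{0}} (h : c.IsRegular) :
    (Cardinal.lift.{1, 0} c).IsRegular := by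
  constructor
  · simpa using (Cardinal.lift_le.{1, 0}.2 h.1)
  · calc Cardinal.lift.{1, 0} c ≤ Cardinal.lift.{1, 0} c.ord.cof := Cardinal.lift_le.2 h.2
      _ = (Ordinal.lift.{1, 0} c.ord).cof := Ordinal.lift_cof _
      _ = (Cardinal.lift.{1, 0} c).ord.cof := by rw [Cardinal.lift_ord]

/-- For a regular cardinal `κ` and an infinite cardinal `λ < κ`, the tail fast function
forcing `F_{λ,κ}` is `≤λ`-directed closed: any downward-directed family `D` of
conditions (conditions are ordered by `q ≤ p ↔ p ⊆ q`) of size at most `λ` has a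
lower bound; indeed the union `⋃₀ D` is itself a condition extending every member
of `D`. -/
theorem fast_tail_directed_closed
    (κ lam : Cardinal.{0}) (hκ : κ.IsRegular) (hlam : ℵ₀ ≤ lam) (hlamκ : lam < κ)
    (D : Set (Set (Ordinal.{0} × Ordinal.{0})))
    (hD : ∀ p ∈ D, IsFastTailCond lam.ord κ p)
    (hdir : ∀ p ∈ D, ∀ q ∈ D, ∃ r ∈ D, p ⊆ r ∧ q ⊆ r)
    (hsize : #D ≤ Cardinal.lift.{1, 0} lam) :
    IsFastTailCond lam.ord κ (⋃₀ D) ∧ ∀ p ∈ D, p ⊆ ⋃₀ D := by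
  have hκl : (Cardinal.lift.{1, 0} κ).IsRegular := isRegular_lift_aux hκ
  have hDκ : #D < Cardinal.lift.{1, 0} κ :=
    hsize.trans_lt (Cardinal.lift_lt.2 hlamκ)
  refine ⟨⟨⟨?_, ?_, ?_, ?_, ?_⟩, ?_⟩, fun p hp => subset_sUnion_of_mem hp⟩
  · -- functionality
    rintro a b b' ⟨p, hp, hbp⟩ ⟨q, hq, hbq⟩
    obtain ⟨r, hr, h1, h2⟩ := hdir p hp q hq
    exact (hD r hr).1.1 a b b' (h1 hbp) (h2 hbq)
  · -- bounds
    rintro a b ⟨p, hp, hm⟩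
    exact (hD p hp).1.2.1 a b hm
  · -- inaccessibility
    rintro a b ⟨p, hp, hm⟩
    exact (hD p hp).1.2.2.1 a b hm
  · -- domain size
    have heq : {a : Ordinal.{0} | ∃ b, (a, b) ∈ ⋃₀ D} =
        ⋃ p ∈ D, {a : Ordinal.{0} | ∃ b, (a, b) ∈ p} := by
      ext a
      simp only [mem_setOf_eq, mem_sUnion, mem_iUnion]
      constructor
      · rintro ⟨b, p, hp, hm⟩; exact ⟨p, hp, b, hm⟩
      · rintro ⟨p, hp, b, hm⟩; exact ⟨b, p, hp, hm⟩
    rw [heq]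
    refine lt_of_le_of_lt (mk_biUnion_le _ _) ?_
    refine Cardinal.mul_lt_of_lt hκl.1 hDκ ?_
    refine Cardinal.iSup_lt_of_isRegular hκl hDκ fun p => ?_
    exact (hD p.1 p.2).1.2.2.2.1
  · -- restrictions
    rintro γ c ⟨p₀, hp₀, hm₀⟩
    constructor
    · rintro a b ⟨q, hq, hmq⟩ hlt
      obtain ⟨r, hr, h1, h2⟩ := hdir p₀ hp₀ q hq
      exact ((hD r hr).1.2.2.2.2 γ c (h1 hm₀)).1 a b (h2 hmq) hlt
    · obtain ⟨cγ, hcγ, hord⟩ := (hD p₀ hp₀).1.2.2.1 γ c hm₀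
      have hcard : γ.card = cγ := by rw [← hord, Cardinal.card_ord]
      have hle : lam.ord ≤ γ := (hD p₀ hp₀).2 γ c hm₀
      rcases eq_or_lt_of_le hle with heq | hlt
      · -- γ = lam.ord : the restricted set is empty
        have hempty : {x : Ordinal.{0} × Ordinal.{0} | x ∈ ⋃₀ D ∧ x.1 < γ} = ∅ := by
          ext x
          simp only [mem_setOf_eq, mem_empty_iff_false, iff_false, not_and]
          rintro ⟨q, hq, hmq⟩ hlt
          have h' := (hD q hq).2 x.1 x.2 hmq
          rw [heq] at h'
          exact absurd h' (not_le.2 hlt)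
        rw [hempty]
        simp only [mk_emptyCollection]
        have : (0 : Cardinal.{0}) < γ.card := by
          rw [hcard]; exact lt_of_lt_of_le aleph0_pos hcγ.isRegular.1
        have h2 : Cardinal.lift.{1, 0} 0 < Cardinal.lift.{1, 0} γ.card :=
          Cardinal.lift_lt.2 this
        rwa [Cardinal.lift_zero] at h2
      · -- lam.ord < γ, so lam < cγ
        have hlamcγ : lam < cγ := by
          rw [← Cardinal.ord_lt_ord, hord]; exact hlt
        have hreg : (Cardinal.lift.{1, 0} γ.card).IsRegular := by
          rw [hcard]; exact isRegular_lift_aux hcγ.isRegular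
        have hDγ : #D < Cardinal.lift.{1, 0} γ.card := by
          rw [hcard]
          exact hsize.trans_lt (Cardinal.lift_lt.2 hlamcγ)
        have heq2 : {x : Ordinal.{0} × Ordinal.{0} | x ∈ ⋃₀ D ∧ x.1 < γ} =
            ⋃ q ∈ D, {x : Ordinal.{0} × Ordinal.{0} | x ∈ q ∧ x.1 < γ} := by
          ext x
          simp only [mem_setOf_eq, mem_sUnion, mem_iUnion]
          constructor
          · rintro ⟨⟨q, hq, hm⟩, h2⟩; exact ⟨q, hq, hm, h2⟩
          · rintro ⟨q, hq, hm, h2⟩; exact ⟨⟨q, hq, hm⟩, h2⟩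
        rw [heq2]
        refine lt_of_le_of_lt (mk_biUnion_le _ _) ?_
        refine Cardinal.mul_lt_of_lt hreg.1 hDγ ?_
        refine Cardinal.iSup_lt_of_isRegular hreg hDγ fun q => ?_
        obtain ⟨r, hr, h1, h2⟩ := hdir p₀ hp₀ q.1 q.2
        refine lt_of_le_of_lt (Cardinal.mk_le_mk_of_subset ?_)
          (((hD r hr).1.2.2.2.2 γ c (h1 hm₀)).2)
        rintro x ⟨hm, hx⟩
        exact ⟨h2 hm, hx⟩
  · -- tail condition
    rintro a b ⟨p, hp, hm⟩
    exact (hD p hp).2 a b hm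
end

section
/- Let κ be a regular uncountable cardinal and let F be a κ-complete proper filter on κ. Then the long Prikry poset Q_F is <κ-directed closed: every downward-directed subset D of Q_F of cardinality less than κ has a lower bound in Q_F. -/
open Cardinal Set

/-- `F` is a `κ`-complete proper filter (on the whole underlying set): it is nontrivial
and closed under intersections of families of fewer than `κ` of its members. -/
def IsKappaCompleteProperFilter {α : Type} (κ : Cardinal.{0}) (F : Filter α) : Prop :=
  F.NeBot ∧
  ∀ (ι : Type) (g : ι → Set α), #ι < κ → (∀ i, g i ∈ F) → (⋂ i, g i) ∈ F

/-- `p = ⟨s, A⟩` is a condition in the long Prikry poset `Q_F`: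
the stem `s` has size less than `κ` and `A ∈ F`. -/
def IsLongPrikryCond {α : Type} (κ : Cardinal.{0}) (F : Filter α)
    (p : Set α × Set α) : Prop :=
  #p.1 < κ ∧ p.2 ∈ F

/-- The long Prikry ordering: `⟨s,A⟩ ≤ ⟨t,B⟩` iff `s` end-extends `t`,
`A ⊆ B`, and `s ∖ t ⊆ B`. -/
def LongPrikryLE {α : Type} [LinearOrder α] (p q : Set α × Set α) : Prop :=
  q.1 ⊆ p.1 ∧ (∀ x ∈ p.1, x ∉ q.1 → ∀ y ∈ q.1, y < x) ∧ p.2 ⊆ q.2 ∧ p.1 \ q.1 ⊆ q.2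

/-- For a regular uncountable cardinal `κ` (viewed as the linearly ordered type
`κ.ord.toType`) and a `κ`-complete proper filter `F` on `κ`, the long Prikry poset
`Q_F` is `<κ`-directed closed: every downward-directed set of conditions of size
less than `κ` has a lower bound in `Q_F`. -/
theorem long_prikry_directed_closed
    (κ : Cardinal.{0}) (hreg : κ.IsRegular) (hunc : ℵ₀ < κ)
    (F : Filter κ.ord.ToType) (hF : IsKappaCompleteProperFilter κ F)
    (D : Set (Set κ.ord.ToType × Set κ.ord.ToType))
    (hD : ∀ p ∈ D, IsLongPrikryCond κ F p)
    (hdir : ∀ p ∈ D, ∀ q ∈ D, ∃ r ∈ D, LongPrikryLE r p ∧ LongPrikryLE r q)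
    (hsize : #D < κ) :
    ∃ r, IsLongPrikryCond κ F r ∧ ∀ p ∈ D, LongPrikryLE r p := by
  classical
  refine ⟨(⋃ p : D, (p : _).1.1, ⋂ p : D, (p : _).1.2), ⟨?_, ?_⟩, ?_⟩
  · calc #(⋃ p : D, (p : _).1.1) ≤ #D * ⨆ p : D, #(p : _).1.1 := mk_iUnion_le _
      _ < κ := Cardinal.mul_lt_of_lt hreg.aleph0_le hsize
        (Cardinal.iSup_lt_of_isRegular hreg hsize fun p => (hD p p.2).1)
  · exact hF.2 D _ hsize fun p => (hD p p.2).2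
  · intro p hp
    refine ⟨subset_iUnion_of_subset ⟨p, hp⟩ subset_rfl, ?_, iInter_subset _ (⟨p, hp⟩ : D), ?_⟩
    · intro x hx hxp y hy
      obtain ⟨_, ⟨⟨q, hq⟩, rfl⟩, hxq⟩ := hx
      obtain ⟨r, _, hrp, hrq⟩ := hdir p hp q hq
      exact hrp.2.1 x (hrq.1 hxq) hxp y hy
    · rintro x ⟨hx, hxp⟩
      obtain ⟨_, ⟨⟨q, hq⟩, rfl⟩, hxq⟩ := hx
      obtain ⟨r, _, hrp, hrq⟩ := hdir p hp q hq
      exact hrp.2.2.2 ⟨hrq.1 hxq, hxp⟩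
end

section
/- Let κ be a regular uncountable cardinal and let λ and θ be cardinals with κ ≤ λ ≤ θ and cf(θ) ≥ κ. If μ is a fine κ-complete ultrafilter on P_κλ and η is a fine κ-complete ultrafilter on P_κθ, then the product ultrafilter μ × η on P_κλ × P_κθ is isomorphic to a fine κ-complete ultrafilter on P_κθ. -/
open Cardinal Set

/-- `P_κ X`: the collection of subsets of `X` of size less than `κ` (as a type). -/
abbrev PKappa (κ : Cardinal.{0}) (X : Type) : Type := {s : Set X // #s < κ}

/-- An ultrafilter on `P_κ X` is fine if for each `x ∈ X` the collection of sets
containing `x` is large. -/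
def FineUF {X : Type} (κ : Cardinal.{0}) (U : Ultrafilter (PKappa κ X)) : Prop :=
  ∀ x : X, {s : PKappa κ X | x ∈ s.1} ∈ U

/-- An ultrafilter is `κ`-complete if it is closed under intersections of families
of fewer than `κ` of its members. -/
def KappaCompleteUF {A : Type} (κ : Cardinal.{0}) (U : Ultrafilter A) : Prop :=
  ∀ (ι : Type) (g : ι → Set A), #ι < κ → (∀ i, g i ∈ U) → (⋂ i, g i) ∈ U

/-- Two ultrafilters are isomorphic when there are large sets `S ∈ U`, `T ∈ V` and a
bijection `g : S → T` such that for every `Z ⊆ S`, `Z ∈ U` iff `g '' Z ∈ V`. -/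
def UFIso {A B : Type} (U : Ultrafilter A) (V : Ultrafilter B) : Prop :=
  ∃ (S : Set A) (T : Set B) (g : A → B), S ∈ U ∧ T ∈ V ∧ Set.BijOn g S T ∧
    ∀ Z ⊆ S, (Z ∈ U ↔ g '' Z ∈ V)

/-- Membership in an image of an equivalence. -/
lemma mem_image_equiv' {A B : Type} (e : A ≃ B) (s : Set A) (b : B) :
    b ∈ e '' s ↔ e.symm b ∈ s := by
  constructor
  · rintro ⟨z, hz, rfl⟩; simpa using hz
  · intro h; exact ⟨e.symm b, h, e.apply_symm_apply b⟩

/-- The canonical bijection `P_κ X × P_κ Y ≃ P_κ Y` induced by a bijection `X ⊕ Y ≃ Y`. -/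
def pkProdEquiv (κ : Cardinal.{0}) (hκ : ℵ₀ ≤ κ) {X Y : Type} (e : X ⊕ Y ≃ Y) :
    PKappa κ X × PKappa κ Y ≃ PKappa κ Y where
  toFun p := ⟨e '' (Sum.inl '' p.1.1 ∪ Sum.inr '' p.2.1), by
    rw [Cardinal.mk_image_eq e.injective]
    refine lt_of_le_of_lt (Cardinal.mk_union_le _ _) ?_
    rw [Cardinal.mk_image_eq Sum.inl_injective, Cardinal.mk_image_eq Sum.inr_injective]
    exact Cardinal.add_lt_of_lt hκ p.1.2 p.2.2⟩
  invFun c := (⟨Sum.inl ⁻¹' (e.symm '' c.1), by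
      refine lt_of_le_of_lt (Cardinal.mk_preimage_of_injective _ _ Sum.inl_injective) ?_
      rw [Cardinal.mk_image_eq e.symm.injective]; exact c.2⟩,
    ⟨Sum.inr ⁻¹' (e.symm '' c.1), by
      refine lt_of_le_of_lt (Cardinal.mk_preimage_of_injective _ _ Sum.inr_injective) ?_
      rw [Cardinal.mk_image_eq e.symm.injective]; exact c.2⟩)
  left_inv p := by
    have h : e.symm '' (e '' (Sum.inl '' p.1.1 ∪ Sum.inr '' p.2.1))
        = Sum.inl '' p.1.1 ∪ Sum.inr '' p.2.1 := by
      rw [Set.image_image]; simp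
    refine Prod.ext (Subtype.ext ?_) (Subtype.ext ?_) <;>
      · dsimp only; rw [h]; ext x; simp
  right_inv c := by
    have h : Sum.inl '' (Sum.inl ⁻¹' (e.symm '' c.1))
        ∪ Sum.inr '' (Sum.inr ⁻¹' (e.symm '' c.1)) = e.symm '' c.1 := by
      ext z; cases z <;> simp
    refine Subtype.ext ?_
    dsimp only
    rw [h]
    exact e.image_symm_image c.1

lemma pkProdEquiv_apply (κ : Cardinal.{0}) (hκ : ℵ₀ ≤ κ) {X Y : Type} (e : X ⊕ Y ≃ Y)
    (p : PKappa κ X × PKappa κ Y) :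
    (pkProdEquiv κ hκ e p).1 = e '' (Sum.inl '' p.1.1 ∪ Sum.inr '' p.2.1) := rfl

/-- If `κ ≤ λ ≤ θ`, `cf(θ) ≥ κ`, `μ` is a fine `κ`-complete ultrafilter on `P_κ λ`
and `η` is a fine `κ`-complete ultrafilter on `P_κ θ`, then the product ultrafilter
`μ × η` (characterized by `W ∈ μ × η ↔ {a | {b | (a,b) ∈ W} ∈ η} ∈ μ`) is isomorphic
to a fine `κ`-complete ultrafilter on `P_κ θ`.  (The underlying sets `λ` and `θ` are
represented by types `X` and `Y` of those cardinalities.) -/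
theorem product_fine_measure_iso
    (κ lam θ : Cardinal.{0}) (hreg : κ.IsRegular) (hunc : ℵ₀ < κ)
    (hκlam : κ ≤ lam) (hlamθ : lam ≤ θ) (hcof : κ ≤ θ.ord.cof)
    (X Y : Type) (hX : #X = lam) (hY : #Y = θ)
    (μ : Ultrafilter (PKappa κ X)) (hμfine : FineUF κ μ) (hμcomp : KappaCompleteUF κ μ)
    (η : Ultrafilter (PKappa κ Y)) (hηfine : FineUF κ η) (hηcomp : KappaCompleteUF κ η)
    (W : Ultrafilter (PKappa κ X × PKappa κ Y))
    (hW : ∀ s : Set (PKappa κ X × PKappa κ Y),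
      s ∈ W ↔ {a : PKappa κ X | {b : PKappa κ Y | (a, b) ∈ s} ∈ η} ∈ μ) :
    ∃ ν : Ultrafilter (PKappa κ Y), FineUF κ ν ∧ KappaCompleteUF κ ν ∧ UFIso W ν := by
  classical
  have hκω : ℵ₀ ≤ κ := hunc.le
  have hθω : ℵ₀ ≤ θ := hκω.trans (hκlam.trans hlamθ)
  have hcard : #(X ⊕ Y) = #Y := by
    rw [Cardinal.mk_sum, Cardinal.lift_id, Cardinal.lift_id, hX, hY]
    exact Cardinal.add_eq_right hθω hlamθ
  obtain ⟨e⟩ := Cardinal.eq.1 hcard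
  set g : PKappa κ X × PKappa κ Y ≃ PKappa κ Y := pkProdEquiv κ hκω e with hg
  set ν : Ultrafilter (PKappa κ Y) := Ultrafilter.map (⇑g) W with hν
  have hmem : ∀ t : Set (PKappa κ Y), t ∈ ν ↔ (⇑g) ⁻¹' t ∈ W := fun t =>
    Ultrafilter.mem_map
  -- W is κ-complete
  have hWcomp : KappaCompleteUF κ W := by
    intro ι s hι hs
    rw [hW]
    have h1 : ∀ i, {a : PKappa κ X | {b : PKappa κ Y | (a, b) ∈ s i} ∈ η} ∈ μ :=
      fun i => (hW _).1 (hs i)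
    refine Filter.mem_of_superset (hμcomp ι _ hι h1) ?_
    intro a ha
    simp only [Set.mem_iInter, Set.mem_setOf_eq] at ha
    show {b : PKappa κ Y | (a, b) ∈ ⋂ i, s i} ∈ η
    have hEq : {b : PKappa κ Y | (a, b) ∈ ⋂ i, s i}
        = ⋂ i, {b : PKappa κ Y | (a, b) ∈ s i} := by
      ext b; simp
    rw [hEq]
    exact hηcomp ι _ hι ha
  -- ν is κ-complete
  have hνcomp : KappaCompleteUF κ ν := by
    intro ι t hι ht
    rw [hmem, Set.preimage_iInter]
    exact hWcomp ι _ hι fun i => (hmem _).1 (ht i)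
  -- ν is fine
  have hνfine : FineUF κ ν := by
    intro y
    rw [hmem]
    have hpre : ∀ p : PKappa κ X × PKappa κ Y,
        (p ∈ (⇑g) ⁻¹' {s : PKappa κ Y | y ∈ s.1}) ↔
          e.symm y ∈ Sum.inl '' p.1.1 ∪ Sum.inr '' p.2.1 := by
      intro p
      simp only [Set.mem_preimage, Set.mem_setOf_eq, hg, pkProdEquiv_apply]
      exact mem_image_equiv' e _ y
    rcases h : e.symm y with x | y'
    · have hset : (⇑g) ⁻¹' {s : PKappa κ Y | y ∈ s.1}
          = {p : PKappa κ X × PKappa κ Y | x ∈ p.1.1} := by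
        ext p
        rw [hpre p, h]
        simp
      rw [hset, hW]
      refine Filter.mem_of_superset (hμfine x) ?_
      intro a ha
      simp only [Set.mem_setOf_eq] at ha
      show {b : PKappa κ Y | (a, b) ∈ ({p : PKappa κ X × PKappa κ Y | x ∈ p.1.1})} ∈ η
      have h2 : {b : PKappa κ Y | (a, b) ∈ ({p : PKappa κ X × PKappa κ Y | x ∈ p.1.1})}
          = Set.univ := Set.eq_univ_of_forall fun _ => ha
      rw [h2]
      exact Filter.univ_mem
    · have hset : (⇑g) ⁻¹' {s : PKappa κ Y | y ∈ s.1}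
          = {p : PKappa κ X × PKappa κ Y | y' ∈ p.2.1} := by
        ext p
        rw [hpre p, h]
        simp
      rw [hset, hW]
      refine Filter.mem_of_superset Filter.univ_mem ?_
      intro a _
      simp only [Set.mem_setOf_eq]
      exact hηfine y'
  refine ⟨ν, hνfine, hνcomp, Set.univ, Set.univ, ⇑g, Filter.univ_mem, Filter.univ_mem,
    g.bijective.bijOn_univ, ?_⟩
  intro Z _
  rw [hmem, Equiv.preimage_image]
end
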